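/- Suppose v(x) > 0 for all x ∈ [0,Q). Then the bidpoint-constrained uniform-price auction with M bid points has a unique minimax-loss bid (q,b), and it equalizes overbidding and underbidding regrets at every bid point: for all k ∈ {1,…,M}, q_k·b_k = L and ∫_{q_{k−1}}^Q (v(x) − b_k)_+ dx = L, where L = L^LAB(q,b) is the minimax loss. -/

import Mathlib

open MeasureTheory intervalIntegral

noncomputable section

/-- Positive part `(x)₊ = max(x,0)`. -/
def pos (x : ℝ) : ℝ := max x 0

/-- An `M`-point bid `(q,b)`: `0 = q_0 ≤ q_1 ≤ … ≤ q_M ≤ Q` and `b_1 ≥ … ≥ b_M ≥ 0`. -/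
def IsBidPts (Q : ℝ) (M : ℕ) (q b : ℕ → ℝ) : Prop :=
  q 0 = 0 ∧ (∀ k, k < M → q k ≤ q (k + 1)) ∧ q M ≤ Q ∧
    (∀ k, 1 ≤ k → k < M → b (k + 1) ≤ b k) ∧ 0 ≤ b M

/-- The step bid function induced by the `M`-point bid `(q,b)`:
`b̂(x) = b_k` for `q_{k−1} ≤ x < q_k` and `b̂(x) = 0` for `x ≥ q_M`. -/
def bhat (M : ℕ) (q b : ℕ → ℝ) (x : ℝ) : ℝ :=
  ∑ k ∈ Finset.Icc 1 M, if q (k - 1) ≤ x ∧ x < q k then b k else 0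

/-- Conditional regret at quantity `t` in the bidpoint-constrained pay-as-bid auction:
`R^PAB_t(q,b) = ∫_0^t (b̂(x) − b̂(t)) dx + ∫_t^Q (v(x) − b̂(t))₊ dx`. -/
def Rcpab (Q : ℝ) (M : ℕ) (v : ℝ → ℝ) (q b : ℕ → ℝ) (t : ℝ) : ℝ :=
  (∫ x in (0:ℝ)..t, (bhat M q b x - bhat M q b t))
    + ∫ x in t..Q, pos (v x - bhat M q b t)

/-- Loss in the bidpoint-constrained pay-as-bid auction:
`L^PAB(q,b) = sup_{t ∈ [0,Q]} R^PAB_t(q,b)`. -/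
def Lcpab (Q : ℝ) (M : ℕ) (v : ℝ → ℝ) (q b : ℕ → ℝ) : ℝ :=
  sSup {r : ℝ | ∃ t ∈ Set.Icc (0:ℝ) Q, r = Rcpab Q M v q b t}

/-- A minimax-loss `M`-point bid in the constrained pay-as-bid auction. -/
def IsMinimaxCPAB (Q : ℝ) (M : ℕ) (v : ℝ → ℝ) (q b : ℕ → ℝ) : Prop :=
  IsBidPts Q M q b ∧ ∀ q' b', IsBidPts Q M q' b' → Lcpab Q M v q b ≤ Lcpab Q M v q' b'

/-- Loss in the bidpoint-constrained uniform-price auction: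
`L^LAB(q,b) = max( max_{1≤k≤M} max( q_k·b_k , ∫_{q_{k−1}}^Q (v(x) − b_k)₊ dx ) , ∫_{q_M}^Q v )`. -/
def Lclab (Q : ℝ) (M : ℕ) (hM : 1 ≤ M) (v : ℝ → ℝ) (q b : ℕ → ℝ) : ℝ :=
  max ((Finset.Icc 1 M).sup' (Finset.nonempty_Icc.mpr hM)
        (fun k => max (q k * b k) (∫ x in q (k - 1)..Q, pos (v x - b k))))
      (∫ x in q M..Q, v x)

/-- A minimax-loss `M`-point bid in the constrained uniform-price auction. -/
def IsMinimaxCLAB (Q : ℝ) (M : ℕ) (hM : 1 ≤ M) (v : ℝ → ℝ) (q b : ℕ → ℝ) : Prop :=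
  IsBidPts Q M q b ∧
    ∀ q' b', IsBidPts Q M q' b' → Lclab Q M hM v q b ≤ Lclab Q M hM v q' b'

/-- The marginal value function: weakly decreasing, nonnegative and integrable on `[0,Q]`. -/
def IsValueFn (Q : ℝ) (v : ℝ → ℝ) : Prop :=
  AntitoneOn v (Set.Icc 0 Q) ∧ (∀ x ∈ Set.Icc (0:ℝ) Q, 0 ≤ v x) ∧
    IntervalIntegrable v volume 0 Q

section UPAproof

variable {Q : ℝ} {v : ℝ → ℝ}

def gg (Q : ℝ) (v : ℝ → ℝ) (s b : ℝ) : ℝ := ∫ x in s..Q, pos (v x - b)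

def WW (Q : ℝ) (v : ℝ → ℝ) (s : ℝ) : ℝ := ∫ x in s..Q, v x

lemma pos_nonneg' (x : ℝ) : 0 ≤ pos x := le_max_right _ _

lemma pos_mono {x y : ℝ} (h : x ≤ y) : pos x ≤ pos y := max_le_max h le_rfl

lemma pos_eq_self {x : ℝ} (h : 0 ≤ x) : pos x = x := max_eq_left h

lemma pos_eq_zero' {x : ℝ} (h : x ≤ 0) : pos x = 0 := max_eq_right h

lemma pos_lip {x y : ℝ} (h : x ≤ y) : pos y ≤ pos x + (y - x) := by
  rcases le_total y 0 with hy | hy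
  · rw [pos_eq_zero' hy]; have := pos_nonneg' x; linarith
  · rw [pos_eq_self hy]
    rcases le_total x 0 with hx | hx
    · rw [pos_eq_zero' hx]; linarith
    · rw [pos_eq_self hx]; linarith

lemma integrable_v (hQ : 0 ≤ Q) (hv : IsValueFn Q v) {a c : ℝ}
    (ha : 0 ≤ a) (hac : a ≤ c) (hc : c ≤ Q) : IntervalIntegrable v volume a c :=
  hv.2.2.mono_set (by rw [Set.uIcc_of_le hac, Set.uIcc_of_le hQ]; exact Set.Icc_subset_Icc ha hc)

lemma integrable_pos (hQ : 0 ≤ Q) (hv : IsValueFn Q v) {a c : ℝ}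
    (ha : 0 ≤ a) (hac : a ≤ c) (hc : c ≤ Q) (b : ℝ) :
    IntervalIntegrable (fun x => pos (v x - b)) volume a c := by
  have h1 : IntervalIntegrable (fun x => v x - b) volume a c :=
    (integrable_v hQ hv ha hac hc).sub intervalIntegrable_const
  have h2 := h1.abs
  have hid : (fun x => pos (v x - b)) = fun x => ((v x - b) + |v x - b|) / 2 := by
    funext x
    rcases le_total 0 (v x - b) with h | h
    · rw [pos_eq_self h, abs_of_nonneg h]; ring
    · rw [pos_eq_zero' h, abs_of_nonpos h]; ring
  rw [hid]
  exact (h1.add h2).div_const 2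

lemma gg_nonneg (hsQ : s ≤ Q) (b : ℝ) : 0 ≤ gg Q v s b :=
  intervalIntegral.integral_nonneg hsQ (fun u _ => pos_nonneg' _)

lemma gg_anti_b (hQ : 0 ≤ Q) (hv : IsValueFn Q v) {s b b' : ℝ}
    (hs0 : 0 ≤ s) (hsQ : s ≤ Q) (hbb : b ≤ b') : gg Q v s b' ≤ gg Q v s b :=
  intervalIntegral.integral_mono_on hsQ (integrable_pos hQ hv hs0 hsQ le_rfl b')
    (integrable_pos hQ hv hs0 hsQ le_rfl b)
    (fun x _ => pos_mono (by linarith))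

lemma gg_split (hQ : 0 ≤ Q) (hv : IsValueFn Q v) {s s' : ℝ}
    (hs0 : 0 ≤ s) (hss : s ≤ s') (hs'Q : s' ≤ Q) (b : ℝ) :
    gg Q v s b = (∫ x in s..s', pos (v x - b)) + gg Q v s' b :=
  (intervalIntegral.integral_add_adjacent_intervals
    (integrable_pos hQ hv hs0 hss (le_trans hs'Q le_rfl) b)
    (integrable_pos hQ hv (le_trans hs0 hss) hs'Q le_rfl b)).symm

lemma gg_anti_s (hQ : 0 ≤ Q) (hv : IsValueFn Q v) {s s' : ℝ}
    (hs0 : 0 ≤ s) (hss : s ≤ s') (hs'Q : s' ≤ Q) (b : ℝ) :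
    gg Q v s' b ≤ gg Q v s b := by
  rw [gg_split hQ hv hs0 hss hs'Q b]
  have h2 : 0 ≤ ∫ x in s..s', pos (v x - b) :=
    intervalIntegral.integral_nonneg (μ := volume) hss (fun u _ => pos_nonneg' (v u - b))
  linarith

lemma gg_exists_gt (hv : IsValueFn Q v) {s b : ℝ} (hsQ : s ≤ Q)
    (hpos : 0 < gg Q v s b) : ∃ x0, s < x0 ∧ x0 ≤ Q ∧ b < v x0 := by
  by_contra h
  push_neg at h
  have : gg Q v s b = 0 := by
    rw [gg, intervalIntegral.integral_of_le hsQ]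
    rw [MeasureTheory.setIntegral_congr_fun measurableSet_Ioc
      (fun x hx => pos_eq_zero' (sub_nonpos.2 (h x hx.1 hx.2)))]
    simp
  linarith

-- strictness and Lipschitz lemmas
lemma gg_strict_b (hQ : 0 ≤ Q) (hv : IsValueFn Q v) {s b b' : ℝ}
    (hs0 : 0 ≤ s) (hsQ : s ≤ Q) (hb : 0 ≤ b) (hbb : b < b')
    (hpos : 0 < gg Q v s b') : gg Q v s b' < gg Q v s b := by
  obtain ⟨x0, hx1, hx2, hx3⟩ := gg_exists_gt hv hsQ hpos
  have hx0Q : x0 ≤ Q := hx2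
  have hsx0 : s ≤ x0 := hx1.le
  have hsplit := gg_split hQ hv hs0 hsx0 hx0Q b
  have hsplit' := gg_split hQ hv hs0 hsx0 hx0Q b'
  have hmid : (∫ x in s..x0, pos (v x - b')) + (b' - b) * (x0 - s)
      ≤ ∫ x in s..x0, pos (v x - b) := by
    have h1 : (∫ x in s..x0, (pos (v x - b') + (b' - b)))
        ≤ ∫ x in s..x0, pos (v x - b) := by
      apply intervalIntegral.integral_mono_on hsx0
        ((integrable_pos hQ hv hs0 hsx0 hx0Q b').add intervalIntegrable_const)
        (integrable_pos hQ hv hs0 hsx0 hx0Q b)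
      intro x hx
      have hvx : v x0 ≤ v x := hv.1 ⟨le_trans hs0 hx.1, le_trans hx.2 hx0Q⟩
        ⟨le_trans hs0 hsx0, hx0Q⟩ hx.2
      have h1 : 0 ≤ v x - b' := by linarith
      rw [pos_eq_self h1, pos_eq_self (by linarith : (0:ℝ) ≤ v x - b)]
      ring_nf; rfl
    rw [intervalIntegral.integral_add (integrable_pos hQ hv hs0 hsx0 hx0Q b')
      intervalIntegrable_const, intervalIntegral.integral_const, smul_eq_mul] at h1
    linarith [h1]
  have htail : gg Q v x0 b' ≤ gg Q v x0 b :=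
    gg_anti_b hQ hv (le_trans hs0 hsx0) hx0Q hbb.le
  have hgain : 0 < (b' - b) * (x0 - s) :=
    mul_pos (by linarith) (by linarith)
  linarith [hsplit, hsplit', hmid, htail]

lemma gg_strict_s (hQ : 0 ≤ Q) (hv : IsValueFn Q v) {s s' b : ℝ}
    (hs0 : 0 ≤ s) (hss : s < s') (hs'Q : s' ≤ Q) (hb : 0 ≤ b)
    (hpos : 0 < gg Q v s' b) : gg Q v s' b < gg Q v s b := by
  obtain ⟨x0, hx1, hx2, hx3⟩ := gg_exists_gt hv (le_trans hs'Q le_rfl) hpos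
  have hsplit := gg_split hQ hv hs0 hss.le hs'Q b
  have hmid : (s' - s) * (v x0 - b) ≤ ∫ x in s..s', pos (v x - b) := by
    have h1 : (∫ _x in s..s', (v x0 - b)) ≤ ∫ x in s..s', pos (v x - b) := by
      apply intervalIntegral.integral_mono_on hss.le intervalIntegrable_const
        (integrable_pos hQ hv hs0 hss.le hs'Q b)
      intro x hx
      have hvx : v x0 ≤ v x := hv.1 ⟨le_trans hs0 hx.1, le_trans hx.2 hs'Q⟩
        ⟨le_trans (le_trans hs0 hss.le) hx1.le, hx2⟩ (le_trans hx.2 hx1.le)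
      calc v x0 - b ≤ v x - b := by linarith
        _ ≤ pos (v x - b) := le_max_left _ _
    rwa [intervalIntegral.integral_const, smul_eq_mul] at h1
  have hgain : 0 < (s' - s) * (v x0 - b) := mul_pos (by linarith) (by linarith)
  linarith

lemma gg_lip_b (hQ : 0 ≤ Q) (hv : IsValueFn Q v) {s b b' : ℝ}
    (hs0 : 0 ≤ s) (hsQ : s ≤ Q) (hbb : b ≤ b') :
    gg Q v s b ≤ gg Q v s b' + (b' - b) * Q := by
  have h1 : gg Q v s b ≤ ∫ x in s..Q, (pos (v x - b') + (b' - b)) := by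
    apply intervalIntegral.integral_mono_on hsQ
      (integrable_pos hQ hv hs0 hsQ le_rfl b)
      ((integrable_pos hQ hv hs0 hsQ le_rfl b').add intervalIntegrable_const)
    intro x _
    have := pos_lip (show v x - b' ≤ v x - b by linarith)
    linarith
  rw [intervalIntegral.integral_add (integrable_pos hQ hv hs0 hsQ le_rfl b')
    intervalIntegrable_const, intervalIntegral.integral_const, smul_eq_mul] at h1
  have h2 : (Q - s) * (b' - b) ≤ Q * (b' - b) := by
    apply mul_le_mul_of_nonneg_right _ (by linarith)
    linarith
  calc gg Q v s b ≤ gg Q v s b' + (Q - s) * (b' - b) := h1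
    _ ≤ gg Q v s b' + (b' - b) * Q := by nlinarith

lemma gg_lip_s (hQ : 0 ≤ Q) (hv : IsValueFn Q v) {s s' b : ℝ}
    (hs0 : 0 ≤ s) (hss : s ≤ s') (hs'Q : s' ≤ Q) (hb : 0 ≤ b) :
    gg Q v s b ≤ gg Q v s' b + (s' - s) * v 0 := by
  rw [gg_split hQ hv hs0 hss hs'Q b]
  have h1 : (∫ x in s..s', pos (v x - b)) ≤ ∫ _x in s..s', v 0 := by
    apply intervalIntegral.integral_mono_on hss
      (integrable_pos hQ hv hs0 hss hs'Q b) intervalIntegrable_const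
    intro x hx
    have hx0 : x ∈ Set.Icc (0:ℝ) Q := ⟨le_trans hs0 hx.1, le_trans hx.2 hs'Q⟩
    have hvx : v x ≤ v 0 := hv.1 ⟨le_rfl, le_trans hs0 (le_trans hss hs'Q)⟩ hx0 hx0.1
    have hvnn : 0 ≤ v x := hv.2.1 x hx0
    rcases le_total (v x - b) 0 with h | h
    · rw [pos_eq_zero' h]; linarith
    · rw [pos_eq_self h]; linarith
  rw [intervalIntegral.integral_const, smul_eq_mul] at h1
  linarith

lemma WW_nonneg (hQ : 0 ≤ Q) (hv : IsValueFn Q v) {s : ℝ} (hs0 : 0 ≤ s) (hsQ : s ≤ Q) :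
    0 ≤ WW Q v s :=
  intervalIntegral.integral_nonneg hsQ (fun u hu => hv.2.1 u ⟨le_trans hs0 hu.1, hu.2⟩)

lemma gg_zero_eq_WW (hQ : 0 ≤ Q) (hv : IsValueFn Q v) {s : ℝ} (hs0 : 0 ≤ s) (hsQ : s ≤ Q) :
    gg Q v s 0 = WW Q v s := by
  apply intervalIntegral.integral_congr
  intro x hx
  rw [Set.uIcc_of_le hsQ] at hx
  have : 0 ≤ v x := hv.2.1 x ⟨le_trans hs0 hx.1, hx.2⟩
  simp only [sub_zero]
  exact pos_eq_self this

lemma gg_le_WW (hQ : 0 ≤ Q) (hv : IsValueFn Q v) {s b : ℝ}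
    (hs0 : 0 ≤ s) (hsQ : s ≤ Q) (hb : 0 ≤ b) : gg Q v s b ≤ WW Q v s := by
  rw [← gg_zero_eq_WW hQ hv hs0 hsQ]
  exact gg_anti_b hQ hv hs0 hsQ hb

lemma gg_v0 (hQ : 0 ≤ Q) (hv : IsValueFn Q v) {s : ℝ} (hs0 : 0 ≤ s) (hsQ : s ≤ Q) :
    gg Q v s (v 0) = 0 := by
  rw [gg]
  rw [intervalIntegral.integral_congr (g := fun _ => (0:ℝ))]
  · simp
  · intro x hx
    rw [Set.uIcc_of_le hsQ] at hx
    have : v x ≤ v 0 := hv.1 ⟨le_rfl, hQ⟩ ⟨le_trans hs0 hx.1, hx.2⟩ (le_trans hs0 hx.1)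
    exact pos_eq_zero' (by linarith)

lemma WW_anti (hQ : 0 ≤ Q) (hv : IsValueFn Q v) {s s' : ℝ}
    (hs0 : 0 ≤ s) (hss : s ≤ s') (hs'Q : s' ≤ Q) : WW Q v s' ≤ WW Q v s := by
  have hsplit : WW Q v s = (∫ x in s..s', v x) + WW Q v s' :=
    (intervalIntegral.integral_add_adjacent_intervals
      (integrable_v hQ hv hs0 hss (le_trans hs'Q le_rfl))
      (integrable_v hQ hv (le_trans hs0 hss) hs'Q le_rfl)).symm
  have h2 : 0 ≤ ∫ x in s..s', v x :=
    intervalIntegral.integral_nonneg (μ := volume) hss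
      (fun u hu => hv.2.1 u ⟨le_trans hs0 hu.1, le_trans hu.2 hs'Q⟩)
  linarith

lemma WW_strict_anti (hQ : 0 ≤ Q) (hv : IsValueFn Q v)
    (hvpos : ∀ x ∈ Set.Ico (0:ℝ) Q, 0 < v x) {s s' : ℝ}
    (hs0 : 0 ≤ s) (hss : s < s') (hs'Q : s' ≤ Q) : WW Q v s' < WW Q v s := by
  set t := (s + s') / 2 with ht
  have hst : s < t := by rw [ht]; linarith
  have hts' : t < s' := by rw [ht]; linarith
  have htQ : t < Q := lt_of_lt_of_le hts' hs'Q
  have ht0 : 0 ≤ t := le_trans hs0 hst.le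
  have hvt : 0 < v t := hvpos t ⟨ht0, htQ⟩
  have hsplit : WW Q v s = (∫ x in s..s', v x) + WW Q v s' :=
    (intervalIntegral.integral_add_adjacent_intervals
      (integrable_v hQ hv hs0 hss.le (le_trans hs'Q le_rfl))
      (integrable_v hQ hv (le_trans hs0 hss.le) hs'Q le_rfl)).symm
  have hsplit2 : (∫ x in s..s', v x) = (∫ x in s..t, v x) + ∫ x in t..s', v x :=
    (intervalIntegral.integral_add_adjacent_intervals
      (integrable_v hQ hv hs0 hst.le (le_trans hts'.le hs'Q))
      (integrable_v hQ hv ht0 hts'.le hs'Q)).symm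
  have h1 : (t - s) * v t ≤ ∫ x in s..t, v x := by
    have := intervalIntegral.integral_mono_on (μ := volume) (f := fun _ => v t) (g := v) hst.le
      intervalIntegrable_const (integrable_v hQ hv hs0 hst.le htQ.le)
      (fun x hx => hv.1 ⟨le_trans hs0 hx.1, le_trans hx.2 htQ.le⟩ ⟨ht0, htQ.le⟩ hx.2)
    rwa [intervalIntegral.integral_const, smul_eq_mul] at this
  have h2 : 0 ≤ ∫ x in t..s', v x :=
    intervalIntegral.integral_nonneg (μ := volume) hts'.le
      (fun u hu => hv.2.1 u ⟨le_trans ht0 hu.1, le_trans hu.2 hs'Q⟩)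
  nlinarith [mul_pos (show 0 < t - s by linarith) hvt]

lemma WW_lip (hQ : 0 ≤ Q) (hv : IsValueFn Q v) {s s' : ℝ}
    (hs0 : 0 ≤ s) (hss : s ≤ s') (hs'Q : s' ≤ Q) :
    WW Q v s ≤ WW Q v s' + (s' - s) * v 0 := by
  rw [← gg_zero_eq_WW hQ hv hs0 (le_trans hss hs'Q), ← gg_zero_eq_WW hQ hv (le_trans hs0 hss) hs'Q]
  exact gg_lip_s hQ hv hs0 hss hs'Q le_rfl

lemma WW_Q (Q : ℝ) (v : ℝ → ℝ) : WW Q v Q = 0 := intervalIntegral.integral_same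
lemma div_anti' {a b c : ℝ} (ha : 0 ≤ a) (hc : 0 < c) (h : c ≤ b) : a / b ≤ a / c := by
  have hb : 0 < b := lt_of_lt_of_le hc h
  rw [div_le_div_iff₀ hb hc]
  nlinarith

lemma div_mono_num' {a a' c : ℝ} (h : a ≤ a') (hc : 0 < c) : a / c ≤ a' / c := by
  rw [div_le_div_iff₀ hc hc]
  nlinarith

def bet (Q : ℝ) (v : ℝ → ℝ) (s L : ℝ) : ℝ := sInf {b : ℝ | 0 ≤ b ∧ gg Q v s b ≤ L}

lemma bet_nonneg (Q : ℝ) (v : ℝ → ℝ) (s L : ℝ) : 0 ≤ bet Q v s L :=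
  Real.sInf_nonneg (fun _ hb => hb.1)

lemma bet_spec (hQ : 0 < Q) (hv : IsValueFn Q v) {s L : ℝ}
    (hs0 : 0 ≤ s) (hsQ : s ≤ Q) (hL0 : 0 < L) (hLW : L ≤ WW Q v s) :
    gg Q v s (bet Q v s L) = L ∧ bet Q v s L ≤ v 0 := by
  have hv0 : 0 ≤ v 0 := hv.2.1 0 ⟨le_rfl, hQ.le⟩
  set T := {b : ℝ | 0 ≤ b ∧ gg Q v s b ≤ L} with hT
  have hmem : v 0 ∈ T := ⟨hv0, by rw [gg_v0 hQ.le hv hs0 hsQ]; exact hL0.le⟩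
  have hne : T.Nonempty := ⟨v 0, hmem⟩
  have hbdd : BddBelow T := ⟨0, fun b hb => hb.1⟩
  have hβ0 : 0 ≤ bet Q v s L := bet_nonneg Q v s L
  have hβv0 : bet Q v s L ≤ v 0 := csInf_le hbdd hmem
  set β := bet Q v s L with hβ
  have claim1 : gg Q v s β ≤ L := by
    by_contra hc
    push_neg at hc
    set ε := (gg Q v s β - L) / Q with hε
    have hε0 : 0 < ε := div_pos (by linarith) hQ
    obtain ⟨b, hbT, hblt⟩ := Real.lt_sInf_add_pos hne hε0
    have hβb : β ≤ b := csInf_le hbdd hbT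
    have hlip := gg_lip_b hQ.le hv hs0 hsQ hβb
    have : (b - β) * Q < ε * Q := by
      apply mul_lt_mul_of_pos_right _ hQ
      have : sInf T = β := rfl
      linarith [hblt, this]
    have hεQ : ε * Q = gg Q v s β - L := by
      rw [hε]; field_simp
    linarith [hbT.2]
  have claim2 : L ≤ gg Q v s β := by
    by_contra hc
    push_neg at hc
    have hβpos : 0 < β := by
      rcases lt_or_eq_of_le hβ0 with h | h
      · exact h
      · exfalso
        have : gg Q v s 0 = WW Q v s := gg_zero_eq_WW hQ.le hv hs0 hsQ
        rw [← h] at hc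
        rw [this] at hc
        linarith
    set ε := min β ((L - gg Q v s β) / Q) with hε
    have hε0 : 0 < ε := lt_min hβpos (div_pos (by linarith) hQ)
    have hεβ : ε ≤ β := min_le_left _ _
    have hb'0 : 0 ≤ β - ε := by linarith
    have hlip := gg_lip_b hQ.le hv hs0 hsQ (show β - ε ≤ β by linarith)
    have hεQ : (β - (β - ε)) * Q ≤ L - gg Q v s β := by
      have h1 : ε ≤ (L - gg Q v s β) / Q := min_le_right _ _
      have h2 : ε * Q ≤ ((L - gg Q v s β) / Q) * Q := mul_le_mul_of_nonneg_right h1 hQ.le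
      rw [div_mul_cancel₀ _ (ne_of_gt hQ)] at h2
      calc (β - (β - ε)) * Q = ε * Q := by ring_nf
        _ ≤ L - gg Q v s β := h2
    have hmem' : β - ε ∈ T := ⟨hb'0, by linarith⟩
    have : β ≤ β - ε := csInf_le hbdd hmem'
    linarith
  exact ⟨le_antisymm claim1 claim2, hβv0⟩

lemma bet_pos (hQ : 0 < Q) (hv : IsValueFn Q v) {s L : ℝ}
    (hs0 : 0 ≤ s) (hsQ : s ≤ Q) (hL0 : 0 < L) (hLW : L < WW Q v s) :
    0 < bet Q v s L := by
  rcases lt_or_eq_of_le (bet_nonneg Q v s L) with h | h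
  · exact h
  · exfalso
    have hspec := (bet_spec hQ hv hs0 hsQ hL0 hLW.le).1
    rw [← h, gg_zero_eq_WW hQ.le hv hs0 hsQ] at hspec
    linarith

lemma gg_comp (hQ : 0 ≤ Q) (hv : IsValueFn Q v) {s s' b b' L L' : ℝ}
    (hs0 : 0 ≤ s) (hss : s ≤ s') (hs'Q : s' ≤ Q) (hb : 0 ≤ b) (hb' : 0 ≤ b')
    (hL0 : 0 < L) (hLL : L ≤ L')
    (hgb : gg Q v s b = L) (hgb' : gg Q v s' b' = L') : b' ≤ b := by
  by_contra hc
  push_neg at hc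
  have h1 : L' ≤ gg Q v s b' := hgb' ▸ gg_anti_s hQ hv hs0 hss hs'Q b'
  have h2 : 0 < gg Q v s b' := lt_of_lt_of_le (lt_of_lt_of_le hL0 hLL) h1
  have h3 := gg_strict_b hQ hv hs0 (le_trans hss hs'Q) hb hc h2
  rw [hgb] at h3
  linarith

def phc (Q : ℝ) (v : ℝ → ℝ) : ℕ → ℝ → ℝ
  | 0 => fun _ => 0
  | (k+1) => fun L => L / bet Q v (phc Q v k L) L

def VU (Q : ℝ) (v : ℝ → ℝ) (m : ℕ) (L : ℝ) : Prop :=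
  0 < L ∧ ∀ j, j ≤ m → phc Q v j L ≤ Q ∧ (j < m → L < WW Q v (phc Q v j L))

lemma phc_nonneg {L : ℝ} (hL : 0 ≤ L) : ∀ k, 0 ≤ phc Q v k L
  | 0 => le_rfl
  | (k+1) => div_nonneg hL (bet_nonneg _ _ _ _)

lemma phc_step (hQ : 0 < Q) (hv : IsValueFn Q v) {m : ℕ} {L : ℝ}
    (hL : VU Q v m L) {k : ℕ} (hk : k < m) :
    0 < bet Q v (phc Q v k L) L ∧ bet Q v (phc Q v k L) L ≤ v 0 ∧
      gg Q v (phc Q v k L) (bet Q v (phc Q v k L) L) = L ∧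
      phc Q v (k+1) L * bet Q v (phc Q v k L) L = L ∧ 0 < phc Q v (k+1) L := by
  obtain ⟨hkQ, hkW⟩ := hL.2 k hk.le
  have hs0 : 0 ≤ phc Q v k L := phc_nonneg hL.1.le k
  have hW := hkW hk
  have hspec := bet_spec hQ hv hs0 hkQ hL.1 hW.le
  have hpos := bet_pos hQ hv hs0 hkQ hL.1 hW
  refine ⟨hpos, hspec.2, hspec.1, ?_, div_pos hL.1 hpos⟩
  show (L / bet Q v (phc Q v k L) L) * bet Q v (phc Q v k L) L = L
  field_simp

lemma phc_mono_succ (hQ : 0 < Q) (hv : IsValueFn Q v) {m : ℕ} {L : ℝ}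
    (hL : VU Q v m L) : ∀ k, k < m → phc Q v k L ≤ phc Q v (k+1) L := by
  intro k
  induction k with
  | zero =>
    intro hk
    have := (phc_step hQ hv hL hk).2.2.2.2
    show phc Q v 0 L ≤ phc Q v 1 L
    have h0 : phc Q v 0 L = 0 := rfl
    rw [h0]; exact this.le
  | succ k ih =>
    intro hk1
    have hk : k < m := lt_trans (Nat.lt_succ_self k) hk1
    have hik := ih hk
    obtain ⟨hp1, _, hg1, _, _⟩ := phc_step hQ hv hL hk
    obtain ⟨hp2, _, hg2, _, _⟩ := phc_step hQ hv hL hk1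
    have hcomp : bet Q v (phc Q v (k+1) L) L ≤ bet Q v (phc Q v k L) L :=
      gg_comp hQ.le hv (phc_nonneg hL.1.le k) hik (hL.2 (k+1) hk1.le).1
        (bet_nonneg _ _ _ _) (bet_nonneg _ _ _ _) hL.1 le_rfl hg1 hg2
    show phc Q v (k+1) L ≤ L / bet Q v (phc Q v (k+1) L) L
    have : phc Q v (k+1) L = L / bet Q v (phc Q v k L) L := rfl
    rw [this]
    exact div_anti' hL.1.le hp2 hcomp

lemma phc_mono_k (hQ : 0 < Q) (hv : IsValueFn Q v) {m : ℕ} {L : ℝ}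
    (hL : VU Q v m L) : ∀ j k, j ≤ k → k ≤ m → phc Q v j L ≤ phc Q v k L := by
  intro j k hjk hkm
  induction k with
  | zero => simp_all
  | succ k ih =>
    rcases eq_or_lt_of_le hjk with h | h
    · rw [h]
    · exact le_trans (ih (Nat.lt_succ_iff.1 h) (le_trans (Nat.le_succ k) hkm))
        (phc_mono_succ hQ hv hL k (lt_of_lt_of_le (Nat.lt_succ_self k) hkm))

lemma phc_comp (hQ : 0 < Q) (hv : IsValueFn Q v) {m : ℕ} {L L' : ℝ}
    (hL : VU Q v m L) (hL' : VU Q v m L') (h : L ≤ L') :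
    ∀ k, k ≤ m → phc Q v k L ≤ phc Q v k L' := by
  intro k
  induction k with
  | zero => intro _; exact le_rfl
  | succ k ih =>
    intro hk1
    have hk : k < m := hk1
    have hik := ih hk.le
    obtain ⟨hp1, _, hg1, _, _⟩ := phc_step hQ hv hL hk
    obtain ⟨hp2, _, hg2, _, _⟩ := phc_step hQ hv hL' hk
    have hcomp : bet Q v (phc Q v k L') L' ≤ bet Q v (phc Q v k L) L :=
      gg_comp hQ.le hv (phc_nonneg hL.1.le k) hik (hL'.2 k hk.le).1
        (bet_nonneg _ _ _ _) (bet_nonneg _ _ _ _) hL.1 h hg1 hg2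
    show L / bet Q v (phc Q v k L) L ≤ L' / bet Q v (phc Q v k L') L'
    calc L / bet Q v (phc Q v k L) L ≤ L' / bet Q v (phc Q v k L) L :=
          div_mono_num' h hp1
      _ ≤ L' / bet Q v (phc Q v k L') L' := div_anti' hL'.1.le hp2 hcomp

lemma VU_dc (hQ : 0 < Q) (hv : IsValueFn Q v) {m : ℕ} {L L' : ℝ}
    (hL' : VU Q v m L') (h0 : 0 < L) (h : L ≤ L') :
    VU Q v m L := by
  have key : ∀ k, k ≤ m → phc Q v k L ≤ phc Q v k L' ∧ phc Q v k L ≤ Q ∧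
      (k < m → L < WW Q v (phc Q v k L)) := by
    intro k
    induction k with
    | zero =>
      intro _
      refine ⟨le_rfl, ?_, fun hk => ?_⟩
      · show (0:ℝ) ≤ Q; exact hQ.le
      · have hW := (hL'.2 0 (Nat.zero_le m)).2 hk
        exact lt_of_le_of_lt h hW
    | succ k ih =>
      intro hk1
      have hk : k < m := hk1
      obtain ⟨hik, hkQ, hkW⟩ := ih hk.le
      have hW : L < WW Q v (phc Q v k L) := hkW hk
      have hs0 : 0 ≤ phc Q v k L := phc_nonneg h0.le k
      have hspec := bet_spec hQ hv hs0 hkQ h0 hW.le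
      have hpos := bet_pos hQ hv hs0 hkQ h0 hW
      obtain ⟨hp', _, hg', _, _⟩ := phc_step hQ hv hL' hk
      have hcomp : bet Q v (phc Q v k L') L' ≤ bet Q v (phc Q v k L) L :=
        gg_comp hQ.le hv hs0 hik (hL'.2 k hk.le).1
          (bet_nonneg _ _ _ _) (bet_nonneg _ _ _ _) h0 h hspec.1 hg'
      have hmono : phc Q v (k+1) L ≤ phc Q v (k+1) L' := by
        show L / bet Q v (phc Q v k L) L ≤ L' / bet Q v (phc Q v k L') L'
        calc L / bet Q v (phc Q v k L) L ≤ L' / bet Q v (phc Q v k L) L :=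
              div_mono_num' h hpos
          _ ≤ L' / bet Q v (phc Q v k L') L' := div_anti' (lt_of_lt_of_le h0 h).le hp' hcomp
      refine ⟨hmono, le_trans hmono (hL'.2 (k+1) hk1).1, fun hk1' => ?_⟩
      have hW' := (hL'.2 (k+1) hk1).2 hk1'
      have := WW_anti hQ.le hv (phc_nonneg h0.le (k+1)) hmono (hL'.2 (k+1) hk1).1
      linarith
  exact ⟨h0, fun j hj => ⟨(key j hj).2.1, (key j hj).2.2⟩⟩
lemma glim_left (hQ : 0 < Q) (hv : IsValueFn Q v) {sn bn Ln : ℕ → ℝ} {sb bb Lb : ℝ}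
    (hsn0 : ∀ n, 0 ≤ sn n) (hsns : ∀ n, sn n ≤ sb) (hsbQ : sb ≤ Q)
    (hbn : ∀ n, bb ≤ bn n) (hbb0 : 0 ≤ bb)
    (hg : ∀ n, gg Q v (sn n) (bn n) = Ln n)
    (hts : Filter.Tendsto sn Filter.atTop (nhds sb))
    (htb : Filter.Tendsto bn Filter.atTop (nhds bb))
    (htL : Filter.Tendsto Ln Filter.atTop (nhds Lb)) :
    gg Q v sb bb = Lb := by
  have upper : ∀ n, gg Q v sb bb ≤ Ln n + (bn n - bb) * Q := by
    intro n
    calc gg Q v sb bb ≤ gg Q v (sn n) bb := gg_anti_s hQ.le hv (hsn0 n) (hsns n) hsbQ bb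
      _ ≤ gg Q v (sn n) (bn n) + (bn n - bb) * Q :=
          gg_lip_b hQ.le hv (hsn0 n) (le_trans (hsns n) hsbQ) (hbn n)
      _ = Ln n + (bn n - bb) * Q := by rw [hg n]
  have lower : ∀ n, Ln n - (sb - sn n) * v 0 ≤ gg Q v sb bb := by
    intro n
    have h1 : gg Q v (sn n) (bn n) ≤ gg Q v (sn n) bb :=
      gg_anti_b hQ.le hv (hsn0 n) (le_trans (hsns n) hsbQ) (hbn n)
    have h2 : gg Q v (sn n) bb ≤ gg Q v sb bb + (sb - sn n) * v 0 :=
      gg_lip_s hQ.le hv (hsn0 n) (hsns n) hsbQ hbb0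
    rw [hg n] at h1
    linarith
  have hU : Filter.Tendsto (fun n => Ln n + (bn n - bb) * Q) Filter.atTop
      (nhds (Lb + (bb - bb) * Q)) := htL.add ((htb.sub tendsto_const_nhds).mul_const Q)
  have hLo : Filter.Tendsto (fun n => Ln n - (sb - sn n) * v 0) Filter.atTop
      (nhds (Lb - (sb - sb) * v 0)) :=
    htL.sub ((tendsto_const_nhds.sub hts).mul_const (v 0))
  have e1 : Lb + (bb - bb) * Q = Lb := by ring
  have e2 : Lb - (sb - sb) * v 0 = Lb := by ring
  rw [e1] at hU; rw [e2] at hLo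
  exact le_antisymm (ge_of_tendsto hU (Filter.Eventually.of_forall upper))
    (le_of_tendsto hLo (Filter.Eventually.of_forall lower))

lemma glim_right (hQ : 0 < Q) (hv : IsValueFn Q v) {sn bn Ln : ℕ → ℝ} {sb bb Lb : ℝ}
    (hsb0 : 0 ≤ sb) (hsns : ∀ n, sb ≤ sn n) (hsnQ : ∀ n, sn n ≤ Q)
    (hbn : ∀ n, bn n ≤ bb) (hbn0 : ∀ n, 0 ≤ bn n)
    (hg : ∀ n, gg Q v (sn n) (bn n) = Ln n)
    (hts : Filter.Tendsto sn Filter.atTop (nhds sb))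
    (htb : Filter.Tendsto bn Filter.atTop (nhds bb))
    (htL : Filter.Tendsto Ln Filter.atTop (nhds Lb)) :
    gg Q v sb bb = Lb := by
  have hsbQ : sb ≤ Q := le_trans (hsns 0) (hsnQ 0)
  have upper : ∀ n, gg Q v sb bb ≤ Ln n + (sn n - sb) * v 0 + (bb - bn n) * Q := by
    intro n
    have h1 : gg Q v sb bb ≤ gg Q v sb (bn n) := gg_anti_b hQ.le hv hsb0 hsbQ (hbn n)
    have h0 : 0 ≤ (bb - bn n) * Q := mul_nonneg (by linarith [hbn n]) hQ.le
    have h2 : gg Q v sb (bn n) ≤ gg Q v (sn n) (bn n) + (sn n - sb) * v 0 :=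
      gg_lip_s hQ.le hv hsb0 (hsns n) (hsnQ n) (hbn0 n)
    rw [hg n] at h2
    linarith
  have lower : ∀ n, Ln n - (bb - bn n) * Q ≤ gg Q v sb bb := by
    intro n
    have h1 : gg Q v (sn n) (bn n) ≤ gg Q v (sn n) bb + (bb - bn n) * Q :=
      gg_lip_b hQ.le hv (le_trans hsb0 (hsns n)) (hsnQ n) (hbn n)
    have h2 : gg Q v (sn n) bb ≤ gg Q v sb bb :=
      gg_anti_s hQ.le hv hsb0 (hsns n) (hsnQ n) bb
    rw [hg n] at h1
    linarith
  have hU : Filter.Tendsto (fun n => Ln n + (sn n - sb) * v 0 + (bb - bn n) * Q) Filter.atTop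
      (nhds (Lb + (sb - sb) * v 0 + (bb - bb) * Q)) :=
    (htL.add ((hts.sub tendsto_const_nhds).mul_const (v 0))).add
      ((tendsto_const_nhds.sub htb).mul_const Q)
  have hLo : Filter.Tendsto (fun n => Ln n - (bb - bn n) * Q) Filter.atTop
      (nhds (Lb - (bb - bb) * Q)) := htL.sub ((tendsto_const_nhds.sub htb).mul_const Q)
  have e1 : Lb + (sb - sb) * v 0 + (bb - bb) * Q = Lb := by ring
  have e2 : Lb - (bb - bb) * Q = Lb := by ring
  rw [e1] at hU; rw [e2] at hLo
  exact le_antisymm (ge_of_tendsto hU (Filter.Eventually.of_forall upper))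
    (le_of_tendsto hLo (Filter.Eventually.of_forall lower))

def SS (Q : ℝ) (v : ℝ → ℝ) (M : ℕ) : Set ℝ :=
  {L : ℝ | VU Q v M L ∧ L ≤ WW Q v (phc Q v M L)}

lemma VU_mono_m {m k : ℕ} {L : ℝ} (h : VU Q v m L) (hk : k ≤ m) : VU Q v k L :=
  ⟨h.1, fun j hj => ⟨(h.2 j (hj.trans hk)).1, fun hjk => (h.2 j (hj.trans hk)).2 (lt_of_lt_of_le hjk hk)⟩⟩

lemma SS_dc (hQ : 0 < Q) (hv : IsValueFn Q v) {M : ℕ} {L L' : ℝ}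
    (hL' : L' ∈ SS Q v M) (h0 : 0 < L) (h : L ≤ L') : L ∈ SS Q v M := by
  have hVU : VU Q v M L := VU_dc hQ hv hL'.1 h0 h
  refine ⟨hVU, ?_⟩
  have hcomp := phc_comp hQ hv hVU hL'.1 h M le_rfl
  have hWa := WW_anti hQ.le hv (phc_nonneg h0.le M) hcomp (hL'.1.2 M le_rfl).1
  linarith [hL'.2]

lemma SS_nonempty (hQ : 0 < Q) (hv : IsValueFn Q v)
    (hvpos : ∀ x ∈ Set.Ico (0:ℝ) Q, 0 < v x) (M : ℕ) : (SS Q v M).Nonempty := by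
  set c := 3 * Q / 4 with hc
  have hc0 : (0:ℝ) ≤ c := by rw [hc]; linarith
  have hcQ : c < Q := by rw [hc]; linarith
  have hQ2c : Q / 2 ≤ c := by rw [hc]; linarith
  set bb := v c / 2 with hbb
  have hbb0 : 0 < bb := half_pos (hvpos c ⟨hc0, hcQ⟩)
  have key : ∀ s, 0 ≤ s → s ≤ Q / 2 → Q / 4 * bb ≤ gg Q v s bb := by
    intro s hs0 hs2
    have h1 : gg Q v (Q/2) bb ≤ gg Q v s bb := gg_anti_s hQ.le hv hs0 hs2 (by linarith) bb
    have h2 : gg Q v (Q/2) bb = (∫ x in (Q/2)..c, pos (v x - bb)) + gg Q v c bb :=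
      gg_split hQ.le hv (by linarith) hQ2c hcQ.le bb
    have h3 : 0 ≤ gg Q v c bb := gg_nonneg hcQ.le bb
    have h4 : (∫ _x in (Q/2)..c, bb) ≤ ∫ x in (Q/2)..c, pos (v x - bb) := by
      apply intervalIntegral.integral_mono_on hQ2c intervalIntegrable_const
        (integrable_pos hQ.le hv (by linarith) hQ2c hcQ.le bb)
      intro x hx
      have hvx : v c ≤ v x := hv.1 ⟨by linarith [hx.1], le_trans hx.2 hcQ.le⟩
        ⟨hc0, hcQ.le⟩ hx.2
      calc bb ≤ v x - bb := by rw [hbb]; linarith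
        _ ≤ pos (v x - bb) := le_max_left _ _
    rw [intervalIntegral.integral_const, smul_eq_mul] at h4
    have hce : (c - Q/2) * bb = Q/4 * bb := by rw [hc]; ring
    rw [hce] at h4
    linarith
  have hWQ2 : 0 < WW Q v (Q/2) := by
    have := WW_strict_anti hQ.le hv hvpos (show (0:ℝ) ≤ Q/2 by linarith)
      (show Q/2 < Q by linarith) le_rfl
    rw [WW_Q] at this
    exact this
  set L0 := min (Q/4*bb) (min (bb*Q/2) (WW Q v (Q/2))) / 2 with hL0
  have hL00 : 0 < L0 := by
    apply div_pos _ two_pos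
    exact lt_min (by positivity) (lt_min (by positivity) hWQ2)
  have hL0a : L0 < Q/4*bb := by
    have h1 : min (Q/4*bb) (min (bb*Q/2) (WW Q v (Q/2))) ≤ Q/4*bb := min_le_left _ _
    rw [hL0]; nlinarith [min_le_left (Q/4*bb) (min (bb*Q/2) (WW Q v (Q/2)))]
  have hL0b : L0 ≤ bb*Q/2 := by
    have h1 : min (Q/4*bb) (min (bb*Q/2) (WW Q v (Q/2))) ≤ bb*Q/2 :=
      le_trans (min_le_right _ _) (min_le_left _ _)
    rw [hL0]; linarith
  have hL0c : L0 < WW Q v (Q/2) := by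
    have h1 : min (Q/4*bb) (min (bb*Q/2) (WW Q v (Q/2))) ≤ WW Q v (Q/2) :=
      le_trans (min_le_right _ _) (min_le_right _ _)
    rw [hL0]; linarith
  have ind : ∀ k, phc Q v k L0 ≤ Q / 2 := by
    intro k
    induction k with
    | zero => show (0:ℝ) ≤ Q/2; linarith
    | succ k ih =>
      have hs0 : 0 ≤ phc Q v k L0 := phc_nonneg hL00.le k
      have hkQ : phc Q v k L0 ≤ Q := by linarith
      have hW : L0 < WW Q v (phc Q v k L0) :=
        lt_of_lt_of_le hL0c (WW_anti hQ.le hv hs0 ih (by linarith))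
      have hspec := bet_spec hQ hv hs0 hkQ hL00 hW.le
      have hbet : bb ≤ bet Q v (phc Q v k L0) L0 := by
        by_contra hcon
        push_neg at hcon
        have h5 : gg Q v (phc Q v k L0) bb ≤ gg Q v (phc Q v k L0) (bet Q v (phc Q v k L0) L0) :=
          gg_anti_b hQ.le hv hs0 hkQ hcon.le
        rw [hspec.1] at h5
        have := key _ hs0 ih
        linarith
      show L0 / bet Q v (phc Q v k L0) L0 ≤ Q / 2
      calc L0 / bet Q v (phc Q v k L0) L0 ≤ L0 / bb := div_anti' hL00.le hbb0 hbet
        _ ≤ (bb*Q/2) / bb := div_mono_num' hL0b hbb0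
        _ = Q / 2 := by field_simp
  have hvalid : ∀ k, L0 < WW Q v (phc Q v k L0) := fun k =>
    lt_of_lt_of_le hL0c (WW_anti hQ.le hv (phc_nonneg hL00.le k) (ind k) (by linarith))
  exact ⟨L0, ⟨hL00, fun j _ => ⟨(ind j).trans (by linarith), fun _ => hvalid j⟩⟩, (hvalid M).le⟩

lemma SS_bddAbove (hQ : 0 < Q) {M : ℕ} (hM : 1 ≤ M) : BddAbove (SS Q v M) := by
  refine ⟨WW Q v 0, fun L hL => ?_⟩
  have := (hL.1.2 0 (Nat.zero_le M)).2 hM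
  exact this.le
open Filter in
lemma Lsup_mem (hQ : 0 < Q) (hv : IsValueFn Q v)
    (hvpos : ∀ x ∈ Set.Ico (0:ℝ) Q, 0 < v x) {M : ℕ} (hM : 1 ≤ M) :
    sSup (SS Q v M) ∈ SS Q v M := by
  obtain ⟨L0, hL0⟩ := SS_nonempty hQ hv hvpos M
  have hne : (SS Q v M).Nonempty := ⟨L0, hL0⟩
  have hbdd : BddAbove (SS Q v M) := SS_bddAbove hQ hM
  set Ls := sSup (SS Q v M) with hLsdef
  have hLs0 : 0 < Ls := lt_of_lt_of_le hL0.1.1 (le_csSup hbdd hL0)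
  have hsub : ∀ L, 0 < L → L < Ls → L ∈ SS Q v M := by
    intro L h0 hL
    obtain ⟨L', hL', hLL'⟩ := exists_lt_of_lt_csSup hne hL
    exact SS_dc hQ hv hL' h0 hLL'.le
  set Ln : ℕ → ℝ := fun n => Ls - Ls / ((n:ℝ)+2) with hLndef
  have hcast : ∀ n : ℕ, (1:ℝ) < (n:ℝ) + 2 := by
    intro n; have := Nat.cast_nonneg (α := ℝ) n; linarith
  have hLn_pos : ∀ n, 0 < Ln n := by
    intro n
    have h1 : Ls / ((n:ℝ)+2) < Ls := div_lt_self hLs0 (hcast n)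
    simp only [hLndef]; linarith
  have hLn_lt : ∀ n, Ln n < Ls := by
    intro n; simp only [hLndef]
    have : 0 < Ls / ((n:ℝ)+2) := div_pos hLs0 (by linarith [hcast n])
    linarith
  have hLn_mem : ∀ n, Ln n ∈ SS Q v M := fun n => hsub _ (hLn_pos n) (hLn_lt n)
  have hLn_mono : Monotone Ln := by
    intro m n hmn
    simp only [hLndef]
    have hc : ((m:ℝ)) ≤ (n:ℝ) := Nat.cast_le.2 hmn
    have h1 := div_anti' hLs0.le
      (show (0:ℝ) < (m:ℝ)+2 by linarith [Nat.cast_nonneg (α := ℝ) m])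
      (show ((m:ℝ)+2) ≤ (n:ℝ)+2 by linarith)
    linarith
  have htL : Tendsto Ln atTop (nhds Ls) := by
    have h1 : Tendsto (fun n : ℕ => ((n:ℝ)+2)) atTop atTop :=
      tendsto_atTop_add_const_right _ 2 tendsto_natCast_atTop_atTop
    have h2 : Tendsto (fun n : ℕ => ((n:ℝ)+2)⁻¹) atTop (nhds 0) := h1.inv_tendsto_atTop
    have h3 : Tendsto (fun n : ℕ => Ls - Ls * ((n:ℝ)+2)⁻¹) atTop (nhds (Ls - Ls * 0)) :=
      tendsto_const_nhds.sub (h2.const_mul Ls)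
    simp only [mul_zero, sub_zero] at h3
    have he : (fun n : ℕ => Ls - Ls / ((n:ℝ)+2)) = fun n : ℕ => Ls - Ls * ((n:ℝ)+2)⁻¹ := by
      funext n; rw [div_eq_mul_inv]
    rw [hLndef, he]
    exact h3
  have aux : ∀ k, k < M →
      Tendsto (fun n => phc Q v k (Ln n)) atTop (nhds (phc Q v k Ls)) →
      phc Q v k Ls ≤ Q →
      (Ls < WW Q v (phc Q v k Ls) ∧
       Tendsto (fun n => phc Q v (k+1) (Ln n)) atTop (nhds (phc Q v (k+1) Ls)) ∧
       phc Q v (k+1) Ls ≤ Q) := by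
    intro k hk ht hkQ
    set sn : ℕ → ℝ := fun n => phc Q v k (Ln n) with hsndef
    set sb := phc Q v k Ls with hsbdef
    have hsn0 : ∀ n, 0 ≤ sn n := fun n => phc_nonneg (hLn_pos n).le k
    have hsb0 : 0 ≤ sb := phc_nonneg hLs0.le k
    have hsns : ∀ n, sn n ≤ sb :=
      Monotone.ge_of_tendsto
        (fun m n hmn => phc_comp hQ hv (hLn_mem m).1 (hLn_mem n).1 (hLn_mono hmn) k hk.le) ht
    set bn : ℕ → ℝ := fun n => bet Q v (sn n) (Ln n) with hbndef
    have hstep : ∀ n, 0 < bn n ∧ bn n ≤ v 0 ∧ gg Q v (sn n) (bn n) = Ln n := by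
      intro n
      obtain ⟨h1, h2, h3, _, _⟩ := phc_step hQ hv (hLn_mem n).1 hk
      exact ⟨h1, h2, h3⟩
    have hb_anti : Antitone bn := by
      intro m n hmn
      exact gg_comp hQ.le hv (hsn0 m)
        (phc_comp hQ hv (hLn_mem m).1 (hLn_mem n).1 (hLn_mono hmn) k hk.le)
        ((hLn_mem n).1.2 k hk.le).1 (hstep m).1.le (hstep n).1.le (hLn_pos m)
        (hLn_mono hmn) (hstep m).2.2 (hstep n).2.2
    have hbb_bdd : BddBelow (Set.range bn) := ⟨0, fun x ⟨n, hn⟩ => hn ▸ (hstep n).1.le⟩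
    set bb := ⨅ n, bn n with hbbdef
    have htb : Tendsto bn atTop (nhds bb) := tendsto_atTop_ciInf hb_anti hbb_bdd
    have hbb0 : 0 ≤ bb := le_ciInf (fun n => (hstep n).1.le)
    have hbble : ∀ n, bb ≤ bn n := fun n => ciInf_le hbb_bdd n
    have hgbb : gg Q v sb bb = Ls :=
      glim_left hQ hv hsn0 hsns hkQ hbble hbb0 (fun n => (hstep n).2.2) ht htb htL
    have hWge : Ls ≤ WW Q v sb := by
      have := gg_le_WW hQ.le hv hsb0 hkQ hbb0
      linarith [hgbb]
    have hstrict : Ls < WW Q v sb := by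
      rcases lt_or_eq_of_le hWge with h | h
      · exact h
      · exfalso
        have hbb_zero : bb = 0 := by
          by_contra hbz
          have hbbpos : 0 < bb := lt_of_le_of_ne hbb0 (Ne.symm hbz)
          have hx := gg_strict_b hQ.le hv hsb0 hkQ le_rfl hbbpos
            (by rw [hgbb]; exact hLs0)
          rw [gg_zero_eq_WW hQ.le hv hsb0 hkQ, hgbb] at hx
          linarith
        have hlb : ∀ n, Ln 0 / Q ≤ bn n := by
          intro n
          have hq1 : phc Q v (k+1) (Ln n) ≤ Q := ((hLn_mem n).1.2 (k+1) hk).1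
          have hq2 : Ln n / bn n ≤ Q := hq1
          have h2 : Ln n ≤ Q * bn n := (div_le_iff₀ (hstep n).1).1 hq2
          rw [div_le_iff₀ hQ]
          have h3 : Ln 0 ≤ Ln n := hLn_mono (Nat.zero_le n)
          nlinarith
        have h1 : Ln 0 / Q ≤ bb := le_ciInf hlb
        have h2 : 0 < Ln 0 / Q := div_pos (hLn_pos 0) hQ
        rw [hbb_zero] at h1
        linarith
    have hspec := bet_spec hQ hv hsb0 hkQ hLs0 hstrict.le
    have hbpos := bet_pos hQ hv hsb0 hkQ hLs0 hstrict
    have hbb_eq : bb = bet Q v sb Ls := by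
      have h1 : bet Q v sb Ls ≤ bb :=
        gg_comp hQ.le hv hsb0 le_rfl hkQ hbb0 (bet_nonneg _ _ _ _) hLs0 le_rfl hgbb hspec.1
      have h2 : bb ≤ bet Q v sb Ls :=
        gg_comp hQ.le hv hsb0 le_rfl hkQ (bet_nonneg _ _ _ _) hbb0 hLs0 le_rfl hspec.1 hgbb
      linarith
    have hbbpos : 0 < bb := hbb_eq ▸ hbpos
    have htphi : Tendsto (fun n => phc Q v (k+1) (Ln n)) atTop (nhds (phc Q v (k+1) Ls)) := by
      have h1 : Tendsto (fun n => Ln n / bn n) atTop (nhds (Ls / bb)) :=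
        htL.div htb (ne_of_gt hbbpos)
      have h2 : phc Q v (k+1) Ls = Ls / bb := by
        rw [hbb_eq]; rfl
      rw [h2]
      exact h1
    have hq1 : phc Q v (k+1) Ls ≤ Q :=
      le_of_tendsto htphi (Filter.Eventually.of_forall
        (fun n => ((hLn_mem n).1.2 (k+1) hk).1))
    exact ⟨hstrict, htphi, hq1⟩
  have key : ∀ k, k ≤ M →
      (Tendsto (fun n => phc Q v k (Ln n)) atTop (nhds (phc Q v k Ls)) ∧
       phc Q v k Ls ≤ Q ∧ (k < M → Ls < WW Q v (phc Q v k Ls))) := by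
    intro k
    induction k with
    | zero =>
      intro _
      have ht0 : Tendsto (fun n => phc Q v 0 (Ln n)) atTop (nhds (phc Q v 0 Ls)) := by
        show Tendsto (fun _ : ℕ => (0:ℝ)) atTop (nhds (0:ℝ))
        exact tendsto_const_nhds
      refine ⟨ht0, ?_, fun h0M => (aux 0 h0M ht0 hQ.le).1⟩
      show (0:ℝ) ≤ Q; exact hQ.le
    | succ k ih =>
      intro hk1
      have hk : k < M := hk1
      obtain ⟨ht, hq, _⟩ := ih hk.le
      obtain ⟨_, ht1, hq1⟩ := aux k hk ht hq
      exact ⟨ht1, hq1, fun hk1M => (aux (k+1) hk1M ht1 hq1).1⟩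
  have hVU : VU Q v M Ls := ⟨hLs0, fun j hj => ⟨(key j hj).2.1, (key j hj).2.2⟩⟩
  refine ⟨hVU, ?_⟩
  have htM := (key M le_rfl).1
  have hqM := (key M le_rfl).2.1
  have hfin : ∀ n, Ln n ≤ WW Q v (phc Q v M Ls) + (phc Q v M Ls - phc Q v M (Ln n)) * v 0 := by
    intro n
    have hcomp : phc Q v M (Ln n) ≤ phc Q v M Ls :=
      phc_comp hQ hv (hLn_mem n).1 hVU (hLn_lt n).le M le_rfl
    have hlip := WW_lip hQ.le hv (phc_nonneg (hLn_pos n).le M) hcomp hqM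
    have hWn : Ln n ≤ WW Q v (phc Q v M (Ln n)) := (hLn_mem n).2
    linarith
  have hT : Tendsto (fun n => WW Q v (phc Q v M Ls) + (phc Q v M Ls - phc Q v M (Ln n)) * v 0)
      atTop (nhds (WW Q v (phc Q v M Ls) + (phc Q v M Ls - phc Q v M Ls) * v 0)) :=
    tendsto_const_nhds.add ((tendsto_const_nhds.sub htM).mul_const (v 0))
  have he : WW Q v (phc Q v M Ls) + (phc Q v M Ls - phc Q v M Ls) * v 0
      = WW Q v (phc Q v M Ls) := by ring
  rw [he] at hT
  exact le_of_tendsto_of_tendsto htL hT (Filter.Eventually.of_forall hfin)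
open Filter in
lemma Lsup_W_le (hQ : 0 < Q) (hv : IsValueFn Q v)
    (hvpos : ∀ x ∈ Set.Ico (0:ℝ) Q, 0 < v x) {M : ℕ} (hM : 1 ≤ M) :
    WW Q v (phc Q v M (sSup (SS Q v M))) ≤ sSup (SS Q v M) := by
  by_contra hgt
  push_neg at hgt
  set Ls := sSup (SS Q v M) with hLsdef
  have hmem : Ls ∈ SS Q v M := Lsup_mem hQ hv hvpos hM
  have hVU : VU Q v M Ls := hmem.1
  have hLs0 : 0 < Ls := hVU.1
  have hbdd : BddAbove (SS Q v M) := SS_bddAbove hQ hM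
  have hmargin : ∀ k, k ≤ M → Ls < WW Q v (phc Q v k Ls) := by
    intro k hk
    have h1 : phc Q v k Ls ≤ phc Q v M Ls := phc_mono_k hQ hv hVU k M hk le_rfl
    have h2 := WW_anti hQ.le hv (phc_nonneg hLs0.le k) h1 (hVU.2 M le_rfl).1
    linarith
  have hltQ : ∀ k, k ≤ M → phc Q v k Ls < Q := by
    intro k hk
    rcases lt_or_eq_of_le (hVU.2 k hk).1 with h | h
    · exact h
    · exfalso
      have := hmargin k hk
      rw [h, WW_Q] at this
      linarith
  set Ln : ℕ → ℝ := fun n => Ls + Ls / ((n:ℝ)+2) with hLndef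
  have hcast : ∀ n : ℕ, (0:ℝ) < (n:ℝ) + 2 := by
    intro n; have := Nat.cast_nonneg (α := ℝ) n; linarith
  have hLn_gt : ∀ n, Ls < Ln n := by
    intro n; simp only [hLndef]
    have : 0 < Ls / ((n:ℝ)+2) := div_pos hLs0 (hcast n)
    linarith
  have hLn_pos : ∀ n, 0 < Ln n := fun n => lt_trans hLs0 (hLn_gt n)
  have hLn_anti : Antitone Ln := by
    intro m n hmn
    simp only [hLndef]
    have hc : ((m:ℝ)) ≤ (n:ℝ) := Nat.cast_le.2 hmn
    have h1 := div_anti' hLs0.le (hcast m) (show ((m:ℝ)+2) ≤ (n:ℝ)+2 by linarith)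
    linarith
  have htL : Tendsto Ln atTop (nhds Ls) := by
    have h1 : Tendsto (fun n : ℕ => ((n:ℝ)+2)) atTop atTop :=
      tendsto_atTop_add_const_right _ 2 tendsto_natCast_atTop_atTop
    have h2 : Tendsto (fun n : ℕ => ((n:ℝ)+2)⁻¹) atTop (nhds 0) := h1.inv_tendsto_atTop
    have h3 : Tendsto (fun n : ℕ => Ls + Ls * ((n:ℝ)+2)⁻¹) atTop (nhds (Ls + Ls * 0)) :=
      tendsto_const_nhds.add (h2.const_mul Ls)
    simp only [mul_zero, add_zero] at h3
    have he : (fun n : ℕ => Ls + Ls / ((n:ℝ)+2)) = fun n : ℕ => Ls + Ls * ((n:ℝ)+2)⁻¹ := by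
      funext n; rw [div_eq_mul_inv]
    rw [hLndef, he]
    exact h3
  have key : ∀ k, k ≤ M → ∃ N : ℕ,
      (∀ n, N ≤ n → VU Q v k (Ln n) ∧ Ln n < WW Q v (phc Q v k (Ln n))) ∧
      Tendsto (fun n => phc Q v k (Ln n)) atTop (nhds (phc Q v k Ls)) := by
    intro k
    induction k with
    | zero =>
      intro _
      have ht0 : Tendsto (fun n => phc Q v 0 (Ln n)) atTop (nhds (phc Q v 0 Ls)) := by
        show Tendsto (fun _ : ℕ => (0:ℝ)) atTop (nhds (0:ℝ))
        exact tendsto_const_nhds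
      have hm0 : Ls < WW Q v (phc Q v 0 Ls) := hmargin 0 (Nat.zero_le M)
      have hev : ∀ᶠ n in atTop, Ln n < WW Q v (phc Q v 0 Ls) := htL.eventually_lt_const hm0
      obtain ⟨N, hN⟩ := Filter.eventually_atTop.1 hev
      refine ⟨N, fun n hn => ⟨⟨hLn_pos n, fun j hj => ?_⟩, hN n hn⟩, ht0⟩
      have hj0 : j = 0 := Nat.le_zero.1 hj
      subst hj0
      exact ⟨show (0:ℝ) ≤ Q from hQ.le, fun h => absurd h (by omega)⟩
    | succ k ih =>
      intro hk1
      have hk : k < M := hk1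
      obtain ⟨N, hN, ht⟩ := ih hk.le
      have hVUk1Ls : VU Q v (k+1) Ls := VU_mono_m hVU hk1
      have hVUkLs : VU Q v k Ls := VU_mono_m hVU hk.le
      set sb := phc Q v k Ls with hsbdef
      have hsb0 : 0 ≤ sb := phc_nonneg hLs0.le k
      have hsbQ : sb ≤ Q := (hVUkLs.2 k le_rfl).1
      have hmk : Ls < WW Q v sb := hmargin k hk.le
      -- shifted sequences
      set Sn : ℕ → ℝ := fun j => phc Q v k (Ln (j+N)) with hSndef
      set LL : ℕ → ℝ := fun j => Ln (j+N) with hLLdef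
      set Bn : ℕ → ℝ := fun j => bet Q v (Sn j) (LL j) with hBndef
      have hLLpos : ∀ j, 0 < LL j := fun j => hLn_pos _
      have hSn0 : ∀ j, 0 ≤ Sn j := fun j => phc_nonneg (hLLpos j).le k
      have hSnQ : ∀ j, Sn j ≤ Q := fun j => (((hN _ (by omega)).1).2 k le_rfl).1
      have hSstrict : ∀ j, LL j < WW Q v (Sn j) := fun j => (hN _ (by omega)).2
      have hBspec : ∀ j, gg Q v (Sn j) (Bn j) = LL j ∧ 0 < Bn j ∧ Bn j ≤ v 0 := by
        intro j
        have hs := bet_spec hQ hv (hSn0 j) (hSnQ j) (hLLpos j) (hSstrict j).le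
        exact ⟨hs.1, bet_pos hQ hv (hSn0 j) (hSnQ j) (hLLpos j) (hSstrict j), hs.2⟩
      have hsns : ∀ j, sb ≤ Sn j := fun j =>
        phc_comp hQ hv hVUkLs (VU_mono_m ((hN _ (by omega)).1) le_rfl) (hLn_gt _).le k le_rfl
      have hSanti : Antitone Sn := by
        intro i j hij
        exact phc_comp hQ hv (hN _ (by omega)).1 (hN _ (by omega)).1
          (hLn_anti (by omega)) k le_rfl
      have hBmono : Monotone Bn := by
        intro i j hij
        exact gg_comp hQ.le hv (hSn0 j) (hSanti hij) (hSnQ i) (hBspec j).2.1.le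
          (hBspec i).2.1.le (hLLpos j) (hLn_anti (by omega)) (hBspec j).1 (hBspec i).1
      have hB_bdd : BddAbove (Set.range Bn) := ⟨v 0, fun x ⟨j, hj⟩ => hj ▸ (hBspec j).2.2⟩
      set bb := ⨆ j, Bn j with hbbdef
      have htB : Tendsto Bn atTop (nhds bb) := tendsto_atTop_ciSup hBmono hB_bdd
      have hBle : ∀ j, Bn j ≤ bb := fun j => le_ciSup hB_bdd j
      have hbb0 : 0 ≤ bb := le_trans (hBspec 0).2.1.le (hBle 0)
      have htS : Tendsto Sn atTop (nhds sb) := (tendsto_add_atTop_iff_nat N).2 ht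
      have htLL : Tendsto LL atTop (nhds Ls) := (tendsto_add_atTop_iff_nat N).2 htL
      have hgbb : gg Q v sb bb = Ls :=
        glim_right hQ hv hsb0 hsns hSnQ hBle (fun j => (hBspec j).2.1.le)
          (fun j => (hBspec j).1) htS htB htLL
      have hspec := bet_spec hQ hv hsb0 hsbQ hLs0 hmk.le
      have hbpos := bet_pos hQ hv hsb0 hsbQ hLs0 hmk
      have hbb_eq : bb = bet Q v sb Ls := by
        have h1 : bet Q v sb Ls ≤ bb :=
          gg_comp hQ.le hv hsb0 le_rfl hsbQ hbb0 (bet_nonneg _ _ _ _) hLs0 le_rfl hgbb hspec.1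
        have h2 : bb ≤ bet Q v sb Ls :=
          gg_comp hQ.le hv hsb0 le_rfl hsbQ (bet_nonneg _ _ _ _) hbb0 hLs0 le_rfl hspec.1 hgbb
        linarith
      have hbbpos : 0 < bb := hbb_eq ▸ hbpos
      have htphi : Tendsto (fun n => phc Q v (k+1) (Ln n)) atTop (nhds (phc Q v (k+1) Ls)) := by
        rw [← tendsto_add_atTop_iff_nat N]
        have h1 : Tendsto (fun j => LL j / Bn j) atTop (nhds (Ls / bb)) :=
          htLL.div htB (ne_of_gt hbbpos)
        have h2 : phc Q v (k+1) Ls = Ls / bb := by rw [hbb_eq]; rfl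
        rw [h2]
        exact h1
      -- eventually phc (k+1) (Ln n) ≤ Q
      have hq1Ls : phc Q v (k+1) Ls < Q := hltQ (k+1) hk1
      have hev1 : ∀ᶠ n in atTop, phc Q v (k+1) (Ln n) ≤ Q := by
        filter_upwards [htphi.eventually_lt_const hq1Ls] with n hn using hn.le
      -- eventually strict at k+1
      have hmk1 : Ls < WW Q v (phc Q v (k+1) Ls) := hmargin (k+1) hk1
      have hTaux : Tendsto (fun n => Ln n + (phc Q v (k+1) (Ln n) - phc Q v (k+1) Ls) * v 0)
          atTop (nhds (Ls + (phc Q v (k+1) Ls - phc Q v (k+1) Ls) * v 0)) :=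
        htL.add ((htphi.sub tendsto_const_nhds).mul_const (v 0))
      have he2 : Ls + (phc Q v (k+1) Ls - phc Q v (k+1) Ls) * v 0 = Ls := by ring
      rw [he2] at hTaux
      have hev2 : ∀ᶠ n in atTop,
          Ln n + (phc Q v (k+1) (Ln n) - phc Q v (k+1) Ls) * v 0 < WW Q v (phc Q v (k+1) Ls) :=
        hTaux.eventually_lt_const hmk1
      have hevN : ∀ᶠ n in atTop, N ≤ n := Filter.eventually_atTop.2 ⟨N, fun n hn => hn⟩
      obtain ⟨N3, hN3⟩ := Filter.eventually_atTop.1 (hev1.and (hev2.and hevN))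
      refine ⟨N3, fun n hn => ?_, htphi⟩
      obtain ⟨hq1n, hev2n, hNn⟩ := hN3 n hn
      have hVUkn : VU Q v k (Ln n) := (hN n hNn).1
      have hstrictkn : Ln n < WW Q v (phc Q v k (Ln n)) := (hN n hNn).2
      have hVU1 : VU Q v (k+1) (Ln n) := by
        refine ⟨hLn_pos n, fun j hj => ?_⟩
        rcases eq_or_lt_of_le hj with he | hlt
        · subst he
          exact ⟨hq1n, fun h => absurd h (lt_irrefl _)⟩
        · have hjk : j ≤ k := Nat.lt_succ_iff.1 hlt
          refine ⟨(hVUkn.2 j hjk).1, fun _ => ?_⟩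
          rcases eq_or_lt_of_le hjk with he2' | hlt2
          · subst he2'
            exact hstrictkn
          · exact (hVUkn.2 j hjk).2 hlt2
      refine ⟨hVU1, ?_⟩
      -- strict at k+1 for this n
      have hcomp : phc Q v (k+1) Ls ≤ phc Q v (k+1) (Ln n) :=
        phc_comp hQ hv hVUk1Ls hVU1 (hLn_gt n).le (k+1) le_rfl
      have hlip := WW_lip hQ.le hv (phc_nonneg hLs0.le (k+1)) hcomp hq1n
      linarith
  obtain ⟨N, hN, _⟩ := key M le_rfl
  have hmemN : Ln N ∈ SS Q v M := ⟨(hN N le_rfl).1, (hN N le_rfl).2.le⟩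
  have : Ln N ≤ Ls := le_csSup hbdd hmemN
  linarith [hLn_gt N]
lemma chain_lemma (hQ : 0 < Q) (hv : IsValueFn Q v)
    (hvpos : ∀ x ∈ Set.Ico (0:ℝ) Q, 0 < v x) {M : ℕ} (hM : 1 ≤ M)
    {q b : ℕ → ℝ}
    (hq0 : q 0 = 0) (hqmono : ∀ k, k < M → q k ≤ q (k+1)) (hqM : q M ≤ Q)
    (hbmono : ∀ k, 1 ≤ k → k < M → b (k+1) ≤ b k) (hbM : 0 ≤ b M)
    (hcomp_o : ∀ k, 1 ≤ k → k ≤ M → q k * b k ≤ sSup (SS Q v M))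
    (hcomp_u : ∀ k, 1 ≤ k → k ≤ M → gg Q v (q (k-1)) (b k) ≤ sSup (SS Q v M))
    (hcomp_W : WW Q v (q M) ≤ sSup (SS Q v M)) :
    ∀ k, k ≤ M → q k = phc Q v k (sSup (SS Q v M)) ∧
      (1 ≤ k → b k = bet Q v (phc Q v (k-1) (sSup (SS Q v M))) (sSup (SS Q v M))) := by
  set Ls := sSup (SS Q v M) with hLsdef
  have hmem : Ls ∈ SS Q v M := Lsup_mem hQ hv hvpos hM
  have hVU : VU Q v M Ls := hmem.1
  have hLs0 : 0 < Ls := hVU.1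
  have hWeq : WW Q v (phc Q v M Ls) = Ls :=
    le_antisymm (Lsup_W_le hQ hv hvpos hM) hmem.2
  -- bid facts
  have hq_mono : ∀ j k, j ≤ k → k ≤ M → q j ≤ q k := by
    intro j k hjk hkM
    induction k with
    | zero => rw [Nat.le_zero.1 hjk]
    | succ k ih =>
      rcases eq_or_lt_of_le hjk with he | hlt
      · rw [he]
      · exact le_trans (ih (Nat.lt_succ_iff.1 hlt) (by omega)) (hqmono k (by omega))
  have hq_nonneg : ∀ k, k ≤ M → 0 ≤ q k := by
    intro k hk
    have := hq_mono 0 k (Nat.zero_le k) hk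
    rw [hq0] at this
    exact this
  have hqQ : ∀ k, k ≤ M → q k ≤ Q := fun k hk => le_trans (hq_mono k M hk le_rfl) hqM
  have hb_anti : ∀ j k, 1 ≤ j → j ≤ k → k ≤ M → b k ≤ b j := by
    intro j k hj hjk hkM
    induction k with
    | zero => exact absurd hjk (by omega)
    | succ k ih =>
      rcases eq_or_lt_of_le hjk with he | hlt
      · rw [he]
      · have hjk' : j ≤ k := Nat.lt_succ_iff.1 hlt
        exact le_trans (hbmono k (by omega) (by omega)) (ih hjk' (by omega))
  have hb_nonneg : ∀ k, 1 ≤ k → k ≤ M → 0 ≤ b k :=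
    fun k h1 h2 => le_trans hbM (hb_anti k M h1 h2 le_rfl)
  -- forward chain
  have Fwd : ∀ k, k ≤ M → q k ≤ phc Q v k Ls ∧
      (1 ≤ k → bet Q v (phc Q v (k-1) Ls) Ls ≤ b k) := by
    intro k
    induction k with
    | zero =>
      intro _
      constructor
      · rw [hq0]; exact le_rfl
      · intro h; exact absurd h (by omega)
    | succ k ih =>
      intro hk1
      have hk : k < M := hk1
      have hIH : q k ≤ phc Q v k Ls := (ih hk.le).1
      obtain ⟨hbpos, _, hgB, hmul, hphipos⟩ := phc_step hQ hv hVU hk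
      have hu : gg Q v (q k) (b (k+1)) ≤ Ls := hcomp_u (k+1) (by omega) hk1
      have h1 : gg Q v (phc Q v k Ls) (b (k+1)) ≤ Ls :=
        le_trans (gg_anti_s hQ.le hv (hq_nonneg k hk.le) hIH ((hVU.2 k hk.le).1) (b (k+1))) hu
      have hbge : bet Q v (phc Q v k Ls) Ls ≤ b (k+1) := by
        by_contra hc
        push_neg at hc
        have hx := gg_strict_b hQ.le hv (phc_nonneg hLs0.le k) ((hVU.2 k hk.le).1)
          (hb_nonneg (k+1) (by omega) hk1) hc (by rw [hgB]; exact hLs0)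
        rw [hgB] at hx
        linarith
      have hbpos' : 0 < b (k+1) := lt_of_lt_of_le hbpos hbge
      have ho : q (k+1) * b (k+1) ≤ Ls := hcomp_o (k+1) (by omega) hk1
      have hqk1 : q (k+1) ≤ phc Q v (k+1) Ls := by
        have h2 : q (k+1) ≤ Ls / b (k+1) := (le_div_iff₀ hbpos').2 ho
        have h3 : Ls / b (k+1) ≤ Ls / bet Q v (phc Q v k Ls) Ls :=
          div_anti' hLs0.le hbpos hbge
        exact le_trans h2 h3
      exact ⟨hqk1, fun _ => hbge⟩
  -- endpoint
  have hqM_eq : q M = phc Q v M Ls := by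
    have hle : q M ≤ phc Q v M Ls := (Fwd M le_rfl).1
    rcases lt_or_eq_of_le hle with h | h
    · exfalso
      have := WW_strict_anti hQ.le hv hvpos (hq_nonneg M le_rfl) h ((hVU.2 M le_rfl).1)
      rw [hWeq] at this
      linarith [hcomp_W]
    · exact h
  -- backward chain
  have Bwd : ∀ j, j ≤ M → q (M - j) = phc Q v (M - j) Ls := by
    intro j
    induction j with
    | zero => intro _; exact hqM_eq
    | succ j ih =>
      intro hj1
      have hqi : q (M - j) = phc Q v (M - j) Ls := ih (by omega)
      set i := M - j with hidef
      have hi1 : 1 ≤ i := by omega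
      have hiM : i ≤ M := by omega
      have hk' : i - 1 + 1 = i := by omega
      have hkM : i - 1 < M := by omega
      obtain ⟨hbpos, _, hgB, hmul, hphipos⟩ := phc_step hQ hv hVU hkM
      rw [hk'] at hmul hphipos
      -- b i = bet (phc (i-1)) Ls
      have hble : b i ≤ bet Q v (phc Q v (i-1) Ls) Ls := by
        have ho : q i * b i ≤ Ls := hcomp_o i hi1 hiM
        rw [hqi] at ho
        have ho2 : phc Q v i Ls * b i ≤ phc Q v i Ls * bet Q v (phc Q v (i-1) Ls) Ls := by
          rw [hmul]; exact ho
        exact (mul_le_mul_iff_right₀ hphipos).1 ho2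
      have hbge : bet Q v (phc Q v (i-1) Ls) Ls ≤ b i := (Fwd i hiM).2 hi1
      have hbi : b i = bet Q v (phc Q v (i-1) Ls) Ls := le_antisymm hble hbge
      -- q (i-1) = phc (i-1) Ls
      have hgoal : q (i-1) = phc Q v (i-1) Ls := by
        have hle : q (i-1) ≤ phc Q v (i-1) Ls := (Fwd (i-1) (by omega)).1
        rcases lt_or_eq_of_le hle with h | h
        · exfalso
          have hgpos : 0 < gg Q v (phc Q v (i-1) Ls) (b i) := by
            rw [hbi, hgB]; exact hLs0
          have hx := gg_strict_s hQ.le hv (hq_nonneg (i-1) (by omega)) h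
            ((hVU.2 (i-1) (by omega)).1) (hb_nonneg i hi1 hiM) hgpos
          rw [hbi, hgB] at hx
          have hu := hcomp_u i hi1 hiM
          rw [hbi] at hu
          linarith
        · exact h
      have hrw : M - (j+1) = i - 1 := by omega
      rw [hrw]
      exact hgoal
  have hq_eq : ∀ k, k ≤ M → q k = phc Q v k Ls := by
    intro k hk
    have := Bwd (M - k) (by omega)
    rwa [show M - (M - k) = k by omega] at this
  intro k hk
  refine ⟨hq_eq k hk, fun hk1 => ?_⟩
  have hk' : k - 1 + 1 = k := by omega
  have hkM : k - 1 < M := by omega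
  obtain ⟨hbpos, _, hgB, hmul, hphipos⟩ := phc_step hQ hv hVU hkM
  rw [hk'] at hmul hphipos
  have hble : b k ≤ bet Q v (phc Q v (k-1) Ls) Ls := by
    have ho : q k * b k ≤ Ls := hcomp_o k hk1 hk
    rw [hq_eq k hk] at ho
    have ho2 : phc Q v k Ls * b k ≤ phc Q v k Ls * bet Q v (phc Q v (k-1) Ls) Ls := by
      rw [hmul]; exact ho
    exact (mul_le_mul_iff_right₀ hphipos).1 ho2
  exact le_antisymm hble ((Fwd k hk).2 hk1)
end UPAproof

/-- if `v > 0` on `[0,Q)`, the bidpoint-constrained uniform-price auction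
with `M` bid points has a unique minimax-loss bid, and it equalizes overbidding and
underbidding regrets at every bid point: `q_k·b_k = L` and `∫_{q_{k−1}}^Q (v − b_k)₊ = L`
for all `k`, where `L` is the minimax loss. -/
theorem constrained_upa_unique_minimax
    (Q : ℝ) (hQ : 0 < Q) (M : ℕ) (hM : 1 ≤ M)
    (v : ℝ → ℝ) (hv : IsValueFn Q v) (hvpos : ∀ x ∈ Set.Ico (0:ℝ) Q, 0 < v x) :
    ∃ q b : ℕ → ℝ, IsMinimaxCLAB Q M hM v q b ∧
      (∀ q' b', IsMinimaxCLAB Q M hM v q' b' →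
        ∀ k ∈ Finset.Icc 1 M, q' k = q k ∧ b' k = b k) ∧
      (∀ k ∈ Finset.Icc 1 M,
        q k * b k = Lclab Q M hM v q b ∧
        (∫ x in q (k - 1)..Q, pos (v x - b k)) = Lclab Q M hM v q b) := by
  classical
  set Ls := sSup (SS Q v M) with hLsdef
  have hmem : Ls ∈ SS Q v M := Lsup_mem hQ hv hvpos hM
  have hVU : VU Q v M Ls := hmem.1
  have hLs0 : 0 < Ls := hVU.1
  have hWeq : WW Q v (phc Q v M Ls) = Ls :=
    le_antisymm (Lsup_W_le hQ hv hvpos hM) hmem.2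
  set qs : ℕ → ℝ := fun k => phc Q v k Ls with hqsdef
  set bs : ℕ → ℝ := fun k => bet Q v (phc Q v (k-1) Ls) Ls with hbsdef
  have hfact : ∀ k, 1 ≤ k → k ≤ M →
      qs k * bs k = Ls ∧ gg Q v (qs (k-1)) (bs k) = Ls ∧ 0 < bs k := by
    intro k h1 h2
    have hk' : k - 1 + 1 = k := by omega
    have hkM : k - 1 < M := by omega
    obtain ⟨hbpos, _, hgB, hmul, _⟩ := phc_step hQ hv hVU hkM
    rw [hk'] at hmul
    exact ⟨hmul, hgB, hbpos⟩
  have hbid : IsBidPts Q M qs bs := by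
    refine ⟨rfl, fun k hk => phc_mono_succ hQ hv hVU k hk, (hVU.2 M le_rfl).1, ?_,
      bet_nonneg _ _ _ _⟩
    intro k h1 hkM
    have hk1M : k - 1 < M := by omega
    obtain ⟨hbpos1, _, hgB1, _, _⟩ := phc_step hQ hv hVU hk1M
    obtain ⟨hbpos2, _, hgB2, _, _⟩ := phc_step hQ hv hVU hkM
    show bet Q v (phc Q v ((k+1)-1) Ls) Ls ≤ bet Q v (phc Q v (k-1) Ls) Ls
    exact gg_comp hQ.le hv (phc_nonneg hLs0.le (k-1))
      (phc_mono_k hQ hv hVU (k-1) k (by omega) hkM.le) ((hVU.2 k hkM.le).1)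
      hbpos1.le hbpos2.le hLs0 le_rfl hgB1 hgB2
  have hextract : ∀ (q b : ℕ → ℝ), ∀ k, 1 ≤ k → k ≤ M →
      q k * b k ≤ Lclab Q M hM v q b ∧ gg Q v (q (k-1)) (b k) ≤ Lclab Q M hM v q b := by
    intro q b k h1 h2
    have hkmem : k ∈ Finset.Icc 1 M := Finset.mem_Icc.2 ⟨h1, h2⟩
    constructor
    · exact le_trans (le_trans (le_max_left _ _)
        (Finset.le_sup' (fun k => max (q k * b k) (∫ x in q (k - 1)..Q, pos (v x - b k))) hkmem))
        (le_max_left _ _)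
    · exact le_trans (le_trans (le_max_right _ _)
        (Finset.le_sup' (fun k => max (q k * b k) (∫ x in q (k - 1)..Q, pos (v x - b k))) hkmem))
        (le_max_left _ _)
  have hextractW : ∀ (q b : ℕ → ℝ), WW Q v (q M) ≤ Lclab Q M hM v q b :=
    fun q b => le_max_right _ _
  have hLcl : Lclab Q M hM v qs bs = Ls := by
    apply le_antisymm
    · apply max_le
      · apply Finset.sup'_le
        intro k hk
        obtain ⟨h1, h2⟩ := Finset.mem_Icc.1 hk
        obtain ⟨e1, e2, _⟩ := hfact k h1 h2
        exact max_le (le_of_eq e1) (le_of_eq e2)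
      · exact le_of_eq hWeq
    · calc Ls = qs 1 * bs 1 := (hfact 1 le_rfl hM).1.symm
        _ ≤ Lclab Q M hM v qs bs := (hextract qs bs 1 le_rfl hM).1
  have hchain : ∀ (q b : ℕ → ℝ), IsBidPts Q M q b → Lclab Q M hM v q b ≤ Ls →
      ∀ k, k ≤ M → q k = qs k ∧ (1 ≤ k → b k = bs k) := by
    intro q b hb hle
    exact chain_lemma hQ hv hvpos hM hb.1 hb.2.1 hb.2.2.1 hb.2.2.2.1 hb.2.2.2.2
      (fun k h1 h2 => le_trans (hextract q b k h1 h2).1 hle)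
      (fun k h1 h2 => le_trans (hextract q b k h1 h2).2 hle)
      (le_trans (hextractW q b) hle)
  have hminim : ∀ q' b', IsBidPts Q M q' b' →
      Lclab Q M hM v qs bs ≤ Lclab Q M hM v q' b' := by
    intro q' b' hb'
    rw [hLcl]
    by_contra hc
    push_neg at hc
    have hch := hchain q' b' hb' hc.le
    have h1 := (hch 1 hM).1
    have h2 := (hch 1 hM).2 le_rfl
    have h3 := (hextract q' b' 1 le_rfl hM).1
    rw [h1, h2, (hfact 1 le_rfl hM).1] at h3
    linarith
  refine ⟨qs, bs, ⟨hbid, hminim⟩, ?_, ?_⟩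
  · intro q' b' hmm' k hk
    obtain ⟨h1, h2⟩ := Finset.mem_Icc.1 hk
    have hle : Lclab Q M hM v q' b' ≤ Ls := by
      rw [← hLcl]
      exact hmm'.2 qs bs hbid
    have hch := hchain q' b' hmm'.1 hle k h2
    exact ⟨hch.1, hch.2 h1⟩
  · intro k hk
    obtain ⟨h1, h2⟩ := Finset.mem_Icc.1 hk
    obtain ⟨e1, e2, _⟩ := hfact k h1 h2
    rw [hLcl]
    exact ⟨e1, e2⟩

end
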